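/- Let A be an n×n invertible matrix over a field with invertible leading k×k submatrix A₀, and let b ∈ Fⁿ. For j ∈ {k+1,…,n}, define Ĉ_j(b^{(k)}) as the condensed matrix Ĉ with its column indexed by j replaced by b^{(k)} (the condensed right-hand side). Then det(A_j(b)) · det(Ĉ) = det(A) · det(Ĉ_j(b^{(k)})), where A_j(b) is A with column j replaced by b. -/

import Mathlib

open Matrix

def bidx {n : ℕ} (k : ℕ) (hk : k ≤ n) (p : Fin n) (i : Fin (k + 1)) : Fin n :=
  if h : (i : ℕ) < k then ⟨i, lt_of_lt_of_le h hk⟩ else p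

def cHat {R : Type*} [CommRing R] {n : ℕ} (A : Matrix (Fin n) (Fin n) R) (k : ℕ)
    (hk : k ≤ n) (p q : Fin n) : R :=
  Matrix.det (Matrix.of fun i j : Fin (k + 1) => A (bidx k hk p i) (bidx k hk q j))

def bHat {R : Type*} [CommRing R] {n : ℕ} (A : Matrix (Fin n) (Fin n) R)
    (b : Fin n → R) (k : ℕ) (hk : k ≤ n) (p : Fin n) : R :=
  Matrix.det (Matrix.of fun i j : Fin (k + 1) =>
    if h : (j : ℕ) < k then A (bidx k hk p i) ⟨j, lt_of_lt_of_le h hk⟩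
    else b (bidx k hk p i))

def cIdx {n k : ℕ} (hk : k ≤ n) (i : Fin (n - k)) : Fin n :=
  ⟨k + i, by have := i.isLt; omega⟩

/-- Determinant of a bordered matrix in terms of the Schur-type expression. -/
theorem det_border {F : Type*} [Field F] {k : ℕ} (A₀ : Matrix (Fin k) (Fin k) F)
    [Invertible A₀] (u v : Fin k → F) (d : F) :
    Matrix.det (Matrix.of fun i j : Fin (k + 1) =>
      if hi : (i : ℕ) < k then
        (if hj : (j : ℕ) < k then A₀ ⟨i, hi⟩ ⟨j, hj⟩ else u ⟨i, hi⟩)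
      else (if hj : (j : ℕ) < k then v ⟨j, hj⟩ else d)) =
    A₀.det * (d - ∑ i, ∑ l, v i * (⅟A₀) i l * u l) := by
  classical
  set B' : Matrix (Fin k) (Fin 1) F := Matrix.of fun i _ => u i with hB'
  set C' : Matrix (Fin 1) (Fin k) F := Matrix.of fun _ j => v j with hC'
  set D' : Matrix (Fin 1) (Fin 1) F := Matrix.of fun _ _ => d with hD'
  have hM : (Matrix.of fun i j : Fin (k + 1) =>
      if hi : (i : ℕ) < k then
        (if hj : (j : ℕ) < k then A₀ ⟨i, hi⟩ ⟨j, hj⟩ else u ⟨i, hi⟩)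
      else (if hj : (j : ℕ) < k then v ⟨j, hj⟩ else d)) =
      (fromBlocks A₀ B' C' D').submatrix finSumFinEquiv.symm finSumFinEquiv.symm := by
    ext i j
    obtain ⟨a, rfl⟩ := finSumFinEquiv.surjective i
    obtain ⟨c, rfl⟩ := finSumFinEquiv.surjective j
    simp only [submatrix_apply, Equiv.symm_apply_apply, of_apply]
    cases a with
    | inl a =>
      cases c with
      | inl c =>
        simp [finSumFinEquiv_apply_left, a.isLt, c.isLt]
      | inr c =>
        have hc : ¬ ((finSumFinEquiv (Sum.inr c) : Fin (k + 1)) : ℕ) < k := by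
          simp [finSumFinEquiv_apply_right, Fin.natAdd]
        simp [finSumFinEquiv_apply_left, a.isLt, hc, hB']
    | inr a =>
      have ha : ¬ ((finSumFinEquiv (Sum.inr a) : Fin (k + 1)) : ℕ) < k := by
        simp [finSumFinEquiv_apply_right, Fin.natAdd]
      cases c with
      | inl c =>
        simp [finSumFinEquiv_apply_left, ha, c.isLt, hC']
      | inr c =>
        simp [ha, hD']
  rw [hM, det_submatrix_equiv_self, det_fromBlocks₁₁]
  congr 1
  rw [det_fin_one]
  simp only [Matrix.sub_apply, hD', of_apply, mul_apply, hB', hC']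
  congr 1
  rw [Finset.sum_comm]
  simp [Finset.sum_mul, mul_assoc]

/-- Cramer ratios are preserved under Sylvester condensation:
`det(A_j(b)) · det Ĉ = det A · det(Ĉ_j(b^{(k)}))`. -/
theorem cramer_ratio_condensation {F : Type*} [Field F] {n k : ℕ}
    (hk1 : 1 ≤ k) (hk : k ≤ n) (hkn : k ≤ n - 1) (A : Matrix (Fin n) (Fin n) F)
    (hA : IsUnit A.det)
    (h0 : IsUnit (Matrix.det (A.submatrix (Fin.castLE hk) (Fin.castLE hk))))
    (b : Fin n → F) (j : Fin (n - k)) :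
    Matrix.det (A.updateCol (cIdx hk j) b) *
        Matrix.det (Matrix.of fun p q : Fin (n - k) =>
          cHat A k hk (cIdx hk p) (cIdx hk q)) =
      A.det *
        Matrix.det ((Matrix.of fun p q : Fin (n - k) =>
            cHat A k hk (cIdx hk p) (cIdx hk q)).updateCol j
          (fun p : Fin (n - k) => bHat A b k hk (cIdx hk p))) := by
  classical
  have hm : k + (n - k) = n := Nat.add_sub_cancel' hk
  let e : Fin k ⊕ Fin (n - k) ≃ Fin n := finSumFinEquiv.trans (finCongr hm)
  set A₀ : Matrix (Fin k) (Fin k) F := A.submatrix (Fin.castLE hk) (Fin.castLE hk) with hA₀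
  letI : Invertible A₀ := A₀.invertibleOfIsUnitDet h0
  set B : Matrix (Fin k) (Fin (n - k)) F := Matrix.of fun i p => A (Fin.castLE hk i) (cIdx hk p) with hB
  set C : Matrix (Fin (n - k)) (Fin k) F := Matrix.of fun p i => A (cIdx hk p) (Fin.castLE hk i) with hC
  set D : Matrix (Fin (n - k)) (Fin (n - k)) F := Matrix.of fun p q => A (cIdx hk p) (cIdx hk q) with hD
  set S : Matrix (Fin (n - k)) (Fin (n - k)) F := D - C * ⅟A₀ * B with hS
  have he₁ : ∀ i : Fin k, e (Sum.inl i) = Fin.castLE hk i := by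
    intro i; apply Fin.ext; simp [e, finSumFinEquiv_apply_left]
  have he₂ : ∀ p : Fin (n - k), e (Sum.inr p) = cIdx hk p := by
    intro p; apply Fin.ext; simp [e, finSumFinEquiv_apply_right, cIdx, Fin.natAdd]
  have hAe : A.submatrix e e = fromBlocks A₀ B C D := by
    ext i j
    cases i <;> cases j <;>
      simp [he₁, he₂, hA₀, hB, hC, hD, fromBlocks]
  have hdetA : A.det = A₀.det * S.det := by
    rw [← det_submatrix_equiv_self e A, hAe, det_fromBlocks₁₁]
  -- the solution vector
  set x : Fin n → F := A⁻¹ *ᵥ b with hxdef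
  have hx : A *ᵥ x = b := by
    rw [hxdef, mulVec_mulVec, mul_nonsing_inv A hA, one_mulVec]
  set x₀ : Fin k → F := fun i => x (Fin.castLE hk i) with hx₀
  set x₁ : Fin (n - k) → F := fun p => x (cIdx hk p) with hx₁
  set b₀ : Fin k → F := fun i => b (Fin.castLE hk i) with hb₀
  set b₁ : Fin (n - k) → F := fun p => b (cIdx hk p) with hb₁
  have hcomp : Sum.elim x₀ x₁ ∘ e.symm = x := by
    have hxe : x ∘ e = Sum.elim x₀ x₁ := by
      funext a; cases a <;> simp [he₁, he₂, hx₀, hx₁]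
    funext i
    rw [← hxe]
    simp [Function.comp_def, e.apply_symm_apply]
  have hblock : fromBlocks A₀ B C D *ᵥ Sum.elim x₀ x₁ = Sum.elim b₀ b₁ := by
    rw [← hAe, submatrix_mulVec_equiv, hcomp, hx]
    funext a
    cases a <;> simp [he₁, he₂, hb₀, hb₁]
  rw [fromBlocks_mulVec] at hblock
  have h₀ : A₀ *ᵥ x₀ + B *ᵥ x₁ = b₀ := by
    funext i
    have := congrFun hblock (Sum.inl i)
    simpa using this
  have h₁ : C *ᵥ x₀ + D *ᵥ x₁ = b₁ := by
    funext p
    have := congrFun hblock (Sum.inr p)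
    simpa using this
  set bhat : Fin (n - k) → F := b₁ - C *ᵥ (⅟A₀ *ᵥ b₀) with hbhat
  have hSx : S *ᵥ x₁ = bhat := by
    have hBx : B *ᵥ x₁ = b₀ - A₀ *ᵥ x₀ := by
      rw [← h₀]; abel
    have hA₀x : ⅟A₀ *ᵥ (A₀ *ᵥ x₀) = x₀ := by
      rw [mulVec_mulVec, invOf_mul_self, one_mulVec]
    have hDx : D *ᵥ x₁ = b₁ - C *ᵥ x₀ := by
      rw [← h₁]; abel
    rw [hS, sub_mulVec, ← mulVec_mulVec, ← mulVec_mulVec, hBx, mulVec_sub, hA₀x,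
      mulVec_sub, hDx, hbhat]
    abel
  have hSdet : IsUnit S.det := by
    have : IsUnit (A₀.det * S.det) := hdetA ▸ hA
    exact (IsUnit.mul_iff.mp this).2
  have hinvS : ∀ v : Fin (n - k) → F, S⁻¹ *ᵥ (S *ᵥ v) = v := fun v => by
    rw [mulVec_mulVec, nonsing_inv_mul S hSdet, one_mulVec]
  have hinvA : ∀ v : Fin n → F, A⁻¹ *ᵥ (A *ᵥ v) = v := fun v => by
    rw [mulVec_mulVec, nonsing_inv_mul A hA, one_mulVec]
  -- Cramer computations
  have hcrS : cramer S bhat = S.det • x₁ := by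
    calc cramer S bhat = S⁻¹ *ᵥ (S *ᵥ cramer S bhat) := (hinvS _).symm
      _ = S⁻¹ *ᵥ (S.det • bhat) := by rw [mulVec_cramer]
      _ = S⁻¹ *ᵥ (S.det • (S *ᵥ x₁)) := by rw [hSx]
      _ = S.det • (S⁻¹ *ᵥ (S *ᵥ x₁)) := mulVec_smul _ _ _
      _ = S.det • x₁ := by rw [hinvS]
  have hcrA : cramer A b = A.det • x := by
    calc cramer A b = A⁻¹ *ᵥ (A *ᵥ cramer A b) := (hinvA _).symm
      _ = A⁻¹ *ᵥ (A.det • b) := by rw [mulVec_cramer]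
      _ = A⁻¹ *ᵥ (A.det • (A *ᵥ x)) := by rw [hx]
      _ = A.det • (A⁻¹ *ᵥ (A *ᵥ x)) := mulVec_smul _ _ _
      _ = A.det • x := by rw [hinvA]
  have hdetU : Matrix.det (A.updateCol (cIdx hk j) b) = A.det * x₁ j := by
    rw [← cramer_apply, hcrA]; simp [hx₁]
  -- entrywise identification of the condensed matrix
  have hmul : ∀ p q, (C * ⅟A₀ * B) p q =
      ∑ i, ∑ l, A (cIdx hk p) (Fin.castLE hk i) * (⅟A₀) i l * A (Fin.castLE hk l) (cIdx hk q) := by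
    intro p q
    simp only [mul_apply, hC, hB, of_apply, Finset.sum_mul]
    rw [Finset.sum_comm]
  have hcHat : ∀ p q, cHat A k hk (cIdx hk p) (cIdx hk q) = A₀.det * S p q := by
    intro p q
    have hb := det_border A₀ (fun i => A (Fin.castLE hk i) (cIdx hk q))
      (fun i => A (cIdx hk p) (Fin.castLE hk i)) (A (cIdx hk p) (cIdx hk q))
    rw [cHat]
    have hfun : (Matrix.of fun i j : Fin (k + 1) =>
        A (bidx k hk (cIdx hk p) i) (bidx k hk (cIdx hk q) j)) =
        (Matrix.of fun i j : Fin (k + 1) =>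
          if hi : (i : ℕ) < k then
            (if hj : (j : ℕ) < k then A₀ ⟨i, hi⟩ ⟨j, hj⟩
             else (fun i => A (Fin.castLE hk i) (cIdx hk q)) ⟨i, hi⟩)
          else (if hj : (j : ℕ) < k then
            (fun i => A (cIdx hk p) (Fin.castLE hk i)) ⟨j, hj⟩
            else A (cIdx hk p) (cIdx hk q))) := by
      ext i jj
      simp only [of_apply, bidx, hA₀, submatrix_apply]
      split_ifs <;> rfl
    rw [hfun, hb]
    congr 1
    rw [hS, Matrix.sub_apply, hmul p q, hD, of_apply]
  have hbHat : ∀ p, bHat A b k hk (cIdx hk p) = A₀.det * bhat p := by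
    intro p
    have hb2 := det_border A₀ (fun i => b (Fin.castLE hk i))
      (fun i => A (cIdx hk p) (Fin.castLE hk i)) (b (cIdx hk p))
    rw [bHat]
    have hfun : (Matrix.of fun i jj : Fin (k + 1) =>
        if h : (jj : ℕ) < k then A (bidx k hk (cIdx hk p) i) ⟨jj, lt_of_lt_of_le h hk⟩
        else b (bidx k hk (cIdx hk p) i)) =
        (Matrix.of fun i jj : Fin (k + 1) =>
          if hi : (i : ℕ) < k then
            (if hj : (jj : ℕ) < k then A₀ ⟨i, hi⟩ ⟨jj, hj⟩
             else (fun i => b (Fin.castLE hk i)) ⟨i, hi⟩)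
          else (if hj : (jj : ℕ) < k then
            (fun i => A (cIdx hk p) (Fin.castLE hk i)) ⟨jj, hj⟩
            else b (cIdx hk p))) := by
      ext i jj
      simp only [of_apply, bidx, hA₀, submatrix_apply]
      split_ifs <;> rfl
    rw [hfun, hb2]
    congr 1
    rw [hbhat, Pi.sub_apply, hb₁]
    congr 1
    simp only [hC, mulVec, dotProduct, of_apply, Finset.mul_sum, hb₀]
    exact Finset.sum_congr rfl fun i _ => Finset.sum_congr rfl fun l _ => by ring
  have hCeq : (Matrix.of fun p q : Fin (n - k) =>
      cHat A k hk (cIdx hk p) (cIdx hk q)) = A₀.det • S := by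
    ext p q
    rw [of_apply, hcHat p q, Matrix.smul_apply, smul_eq_mul]
  have hdetC : Matrix.det (Matrix.of fun p q : Fin (n - k) =>
      cHat A k hk (cIdx hk p) (cIdx hk q)) = A₀.det ^ (n - k) * S.det := by
    rw [hCeq, det_smul, Fintype.card_fin]
  have hupd : (Matrix.of fun p q : Fin (n - k) =>
      cHat A k hk (cIdx hk p) (cIdx hk q)).updateCol j
        (fun p : Fin (n - k) => bHat A b k hk (cIdx hk p)) =
      A₀.det • S.updateCol j bhat := by
    rw [hCeq]
    ext p q
    by_cases h : q = j <;>
      simp [updateCol_apply, h, Matrix.smul_apply, hbHat]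
  have hdetU2 : Matrix.det ((Matrix.of fun p q : Fin (n - k) =>
      cHat A k hk (cIdx hk p) (cIdx hk q)).updateCol j
        (fun p : Fin (n - k) => bHat A b k hk (cIdx hk p))) =
      A₀.det ^ (n - k) * (S.det * x₁ j) := by
    rw [hupd, det_smul, Fintype.card_fin, ← cramer_apply, hcrS]
    simp
  rw [hdetU, hdetC, hdetU2, hdetA]
  ring
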